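/- Let d be even, let s be a positive integer with 2s ≤ d, and let k ∈ {1, 2, …, s-1}. Then the indexed family {B_ε : ε ∈ I^s, |ε| = k} defines a partition of X_k; that is, the sets B_ε with |ε| = k are pairwise disjoint (for distinct indices ε) and their union is X_k. -/

import Mathlib

/-- Strings of length `d` over the alphabet `S = {0,1,*}`; `none` is the joker `*`. -/
abbrev JString (d : ℕ) := Fin d → Option Bool

/-- The distance between two strings over `{0,1,*}`: the number of positions where both
entries are binary digits and they differ. -/
def jDist {d : ℕ} (u v : JString d) : ℕ :=
  (Finset.univ.filter fun i => ∃ a b : Bool, u i = some a ∧ v i = some b ∧ a ≠ b).card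

/-- `nkd k d` is `n(k,d)`: the maximum size of a family of strings in `S^d` any two
distinct members of which are at distance at least `1` and at most `k`. -/
noncomputable def nkd (k d : ℕ) : ℕ :=
  sSup {m | ∃ F : Finset (JString d),
    (∀ u ∈ F, ∀ v ∈ F, u ≠ v → 1 ≤ jDist u v ∧ jDist u v ≤ k) ∧ F.card = m}

/-- The weight `|x|` of a binary string. -/
def wt {n : ℕ} (x : Fin n → Bool) : ℕ := (Finset.univ.filter fun i => x i = true).card

/-- The inner product `⟨x,y⟩` of two binary strings. -/
def ip {n : ℕ} (x y : Fin n → Bool) : ℕ :=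
  (Finset.univ.filter fun i => x i = true ∧ y i = true).card

/-- The antipode `x̄` of a binary string. -/
def antipode {n : ℕ} (x : Fin n → Bool) : Fin n → Bool := fun i => !(x i)

/-- `t(ε)` (0-based): the largest index at which `ε` differs from its last entry; for
nonconstant `ε` this is the unique (0-based) index `i` with `ε i ≠ ε (i+1) = ⋯ = ε (s-1)`. -/
noncomputable def tIdx {s : ℕ} (ε : Fin s → Bool) : ℕ :=
  sSup {i : ℕ | ∃ h : i < s, ∃ h' : s - 1 < s, ε ⟨i, h⟩ ≠ ε ⟨s - 1, h'⟩}

/-- The set `A_ε = {ε_1} × ⋯ × {ε_{t(ε)}} × I^{s-1-t(ε)} ⊆ I^{s-1}`. -/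
def Aset {s : ℕ} (ε : Fin s → Bool) : Set (Fin (s - 1) → Bool) :=
  {x | ∀ j : Fin (s - 1), (j : ℕ) ≤ tIdx ε →
    x j = ε ⟨(j : ℕ), Nat.lt_of_lt_of_le j.isLt (Nat.sub_le s 1)⟩}

/-- The sets `X_k ⊆ I^{d-s}`: `X_0 = {|x| ≤ d/2 - s}`, `X_k = {|x| = d/2 - s + k}` for
`0 < k < s`, and `X_s = {|x| ≥ d/2}`. -/
def Xk (d s k : ℕ) : Set (Fin (d - s) → Bool) :=
  if k = 0 then {x | wt x ≤ d / 2 - s}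
  else if k = s then {x | d / 2 ≤ wt x}
  else {x | wt x = d / 2 - s + k}

/-- The last `m` coordinates of a binary string of length `n` (junk values if `m > n`). -/
def suffix (m : ℕ) {n : ℕ} (x : Fin n → Bool) : Fin m → Bool :=
  fun j => if h : n - m + (j : ℕ) < n then x ⟨n - m + (j : ℕ), h⟩ else false

/-- The set `B_ε ⊆ I^{d-s}`: `B_α = X_0`, `B_ω = X_s`, and for `ε ∉ {α,ω}`,
`B_ε = X_{|ε|} ∩ (I^{d-2s+1} × A_ε)`, identifying `I^{d-s}` with `I^{d-2s+1} × I^{s-1}`. -/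
def Bset (d : ℕ) {s : ℕ} (ε : Fin s → Bool) : Set (Fin (d - s) → Bool) :=
  if ε = (fun _ => false) then Xk d s 0
  else if ε = (fun _ => true) then Xk d s s
  else Xk d s (wt ε) ∩ {x | suffix (s - 1) x ∈ Aset ε}

/-- Concatenation of a binary string of length `d - s` with a string over `{0,1,*}` of
length `s`, producing a string over `{0,1,*}` of length `d`. -/
def glue {d s : ℕ} (x : Fin (d - s) → Bool) (w : Fin s → Option Bool) : JString d :=
  fun i => if h : (i : ℕ) < d - s then some (x ⟨(i : ℕ), h⟩)
    else if h' : (i : ℕ) - (d - s) < s then w ⟨(i : ℕ) - (d - s), h'⟩ else none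

/-- The set `*^ε = *^{ε_1} × ⋯ × *^{ε_s} ⊆ S^s`, where `*^0 = {*}` and `*^1 = {0,1}`. -/
def starSet {s : ℕ} (ε : Fin s → Bool) : Set (Fin s → Option Bool) :=
  {w | ∀ j, if ε j = true then ∃ b : Bool, w j = some b else w j = none}

/-- The set `C_ε = B_ε × *^ε ⊆ S^d`. -/
def Cset (d : ℕ) {s : ℕ} (ε : Fin s → Bool) : Set (JString d) :=
  {u | ∃ x ∈ Bset d ε, ∃ w ∈ starSet ε, u = glue x w}

/- auxiliary lemmas -/
def epsOf {m : ℕ} (y : Fin m → Bool) (t : Fin m) : Fin (m+1) → Bool :=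
  fun j => if h : (j:ℕ) ≤ (t:ℕ) then y ⟨j, lt_of_le_of_lt h t.isLt⟩ else !(y t)

def Wle {m : ℕ} (y : Fin m → Bool) (t : Fin m) : ℕ :=
  (Finset.univ.filter fun j : Fin m => (j:ℕ) ≤ (t:ℕ) ∧ y j = true).card

lemma wt_epsOf {m : ℕ} (y : Fin m → Bool) (t : Fin m) :
    wt (epsOf y t) = Wle y t + (if y t = true then 0 else m - (t:ℕ)) := by
  classical
  have hsplit := Finset.card_filter_add_card_filter_not
    (s := Finset.univ.filter fun j : Fin (m+1) => epsOf y t j = true)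
    (p := fun j : Fin (m+1) => (j:ℕ) ≤ (t:ℕ))
  rw [Finset.filter_filter, Finset.filter_filter] at hsplit
  have hA : (Finset.univ.filter fun j : Fin (m+1) => epsOf y t j = true ∧ (j:ℕ) ≤ (t:ℕ)).card
      = Wle y t := by
    rw [Wle]
    apply Finset.card_bij (fun (a : Fin (m+1)) (ha : a ∈ _) =>
      (⟨(a:ℕ), lt_of_le_of_lt (by simp at ha; exact ha.2) t.isLt⟩ : Fin m))
    · intro a ha
      simp only [Finset.mem_filter, Finset.mem_univ, true_and] at ha ⊢
      obtain ⟨h1, h2⟩ := ha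
      refine ⟨h2, ?_⟩
      rw [epsOf, dif_pos h2] at h1
      exact h1
    · intro a ha b hb hab
      apply Fin.ext
      exact congrArg (Fin.val (n := m)) hab
    · intro b hb
      simp only [Finset.mem_filter, Finset.mem_univ, true_and] at hb
      refine ⟨⟨(b:ℕ), lt_trans b.isLt (Nat.lt_succ_self m)⟩, ?_, rfl⟩
      simp only [Finset.mem_filter, Finset.mem_univ, true_and]
      refine ⟨?_, hb.1⟩
      rw [epsOf, dif_pos hb.1]
      exact hb.2
  have hB : (Finset.univ.filter fun j : Fin (m+1) => epsOf y t j = true ∧ ¬(j:ℕ) ≤ (t:ℕ)).card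
      = if y t = true then 0 else m - (t:ℕ) := by
    by_cases hyt : y t = true
    · rw [if_pos hyt]
      rw [Finset.card_eq_zero, Finset.filter_eq_empty_iff]
      intro j _
      rintro ⟨h1, h2⟩
      rw [epsOf, dif_neg h2, hyt] at h1
      simp at h1
    · rw [if_neg hyt]
      have : (Finset.univ.filter fun j : Fin (m+1) => epsOf y t j = true ∧ ¬(j:ℕ) ≤ (t:ℕ))
          = Finset.univ.filter fun j : Fin (m+1) => (t:ℕ) < (j:ℕ) := by
        ext j
        simp only [Finset.mem_filter, Finset.mem_univ, true_and, not_le]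
        constructor
        · rintro ⟨_, h2⟩; exact h2
        · intro h
          refine ⟨?_, h⟩
          rw [epsOf, dif_neg (not_le.2 h)]
          simp [hyt]
      rw [this]
      rw [show (Finset.univ.filter fun j : Fin (m+1) => (t:ℕ) < (j:ℕ)) = Finset.Ioi ⟨(t:ℕ), lt_trans t.isLt (Nat.lt_succ_self m)⟩ from by ext j; simp [Finset.mem_Ioi, Fin.lt_def]]
      rw [Fin.card_Ioi]; simp
  rw [wt, ← hsplit, hA, hB]

lemma Wle_mono {m : ℕ} (y : Fin m → Bool) {t t' : Fin m} (h : (t:ℕ) ≤ t') :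
    Wle y t ≤ Wle y t' := by
  apply Finset.card_le_card
  intro j hj
  simp only [Finset.mem_filter, Finset.mem_univ, true_and] at hj ⊢
  exact ⟨le_trans hj.1 h, hj.2⟩

lemma Wle_lt {m : ℕ} (y : Fin m → Bool) {t t' : Fin m} (h : (t:ℕ) < t') (hy : y t' = true) :
    Wle y t + 1 ≤ Wle y t' := by
  apply Finset.card_lt_card
  constructor
  · intro j hj
    simp only [Finset.mem_filter, Finset.mem_univ, true_and] at hj ⊢
    exact ⟨le_trans hj.1 (le_of_lt h), hj.2⟩
  · intro hsub
    have := hsub (by simp [hy] : t' ∈ Finset.univ.filter fun j : Fin m => (j:ℕ) ≤ (t':ℕ) ∧ y j = true)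
    simp only [Finset.mem_filter, Finset.mem_univ, true_and] at this
    omega

lemma Wle_upper {m : ℕ} (y : Fin m → Bool) {t t' : Fin m} (h : (t:ℕ) ≤ t') :
    Wle y t' ≤ Wle y t + ((t':ℕ) - (t:ℕ)) := by
  have h1 : (Finset.univ.filter fun j : Fin m => (j:ℕ) ≤ (t':ℕ) ∧ y j = true)
      ⊆ (Finset.univ.filter fun j : Fin m => (j:ℕ) ≤ (t:ℕ) ∧ y j = true)
        ∪ (Finset.univ.filter fun j : Fin m => (t:ℕ) < (j:ℕ) ∧ (j:ℕ) ≤ (t':ℕ)) := by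
    intro j hj
    simp only [Finset.mem_filter, Finset.mem_union, Finset.mem_univ, true_and] at hj ⊢
    rcases le_or_gt (j:ℕ) (t:ℕ) with h'|h'
    · exact Or.inl ⟨h', hj.2⟩
    · exact Or.inr ⟨h', hj.1⟩
  have h2 : (Finset.univ.filter fun j : Fin m => (t:ℕ) < (j:ℕ) ∧ (j:ℕ) ≤ (t':ℕ)).card
      ≤ (t':ℕ) - (t:ℕ) := by
    rw [← Nat.card_Ioc (t:ℕ) (t':ℕ)]
    refine Finset.card_le_card_of_injOn (fun j : Fin m => (j:ℕ)) ?_ ?_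
    · intro j hj
      simp only [Finset.mem_coe, Finset.mem_filter, Finset.mem_univ, true_and] at hj
      simp [Finset.mem_Ioc, hj.1, hj.2]
    · intro a _ b _ hab
      exact Fin.ext hab
  calc Wle y t' ≤ _ := Finset.card_le_card h1
    _ ≤ _ := Finset.card_union_le _ _
    _ ≤ _ := by exact Nat.add_le_add_left h2 _

lemma Wle_upper' {m : ℕ} (y : Fin m → Bool) {t t' : Fin m} (h : (t:ℕ) < t') (hy : y t' = false) :
    Wle y t' ≤ Wle y t + ((t':ℕ) - (t:ℕ) - 1) := by
  have h1 : (Finset.univ.filter fun j : Fin m => (j:ℕ) ≤ (t':ℕ) ∧ y j = true)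
      ⊆ (Finset.univ.filter fun j : Fin m => (j:ℕ) ≤ (t:ℕ) ∧ y j = true)
        ∪ (Finset.univ.filter fun j : Fin m => (t:ℕ) < (j:ℕ) ∧ (j:ℕ) < (t':ℕ)) := by
    intro j hj
    simp only [Finset.mem_filter, Finset.mem_union, Finset.mem_univ, true_and] at hj ⊢
    rcases le_or_gt (j:ℕ) (t:ℕ) with h'|h'
    · exact Or.inl ⟨h', hj.2⟩
    · refine Or.inr ⟨h', lt_of_le_of_ne hj.1 ?_⟩
      intro he
      have : j = t' := Fin.ext he
      rw [this, hy] at hj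
      simp at hj
  have h2 : (Finset.univ.filter fun j : Fin m => (t:ℕ) < (j:ℕ) ∧ (j:ℕ) < (t':ℕ)).card
      ≤ (t':ℕ) - (t:ℕ) - 1 := by
    rw [← Nat.card_Ioo (t:ℕ) (t':ℕ)]
    refine Finset.card_le_card_of_injOn (fun j : Fin m => (j:ℕ)) ?_ ?_
    · intro j hj
      simp only [Finset.mem_coe, Finset.mem_filter, Finset.mem_univ, true_and] at hj
      simp [Finset.mem_Ioo, hj.1, hj.2]
    · intro a _ b _ hab
      exact Fin.ext hab
  calc Wle y t' ≤ _ := Finset.card_le_card h1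
    _ ≤ _ := Finset.card_union_le _ _
    _ ≤ _ := by exact Nat.add_le_add_left h2 _

lemma Wle_le {m : ℕ} (y : Fin m → Bool) (t : Fin m) : Wle y t ≤ (t:ℕ) + 1 := by
  rw [← Nat.card_Iic (t:ℕ)]
  refine Finset.card_le_card_of_injOn (fun j : Fin m => (j:ℕ)) ?_ ?_
  · intro j hj
    simp only [Finset.mem_coe, Finset.mem_filter, Finset.mem_univ, true_and] at hj
    simp [Finset.mem_Iic, hj.1]
  · intro a _ b _ hab
    exact Fin.ext hab

lemma Wle_pos {m : ℕ} (y : Fin m → Bool) (t : Fin m) (hy : y t = true) : 1 ≤ Wle y t := by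
  rw [Wle, Nat.succ_le_iff, Finset.card_pos]
  exact ⟨t, by simp [hy]⟩

lemma Wle_le' {m : ℕ} (y : Fin m → Bool) (t : Fin m) (hy : y t = false) : Wle y t ≤ (t:ℕ) := by
  rw [← Nat.card_Iio (t:ℕ)]
  refine Finset.card_le_card_of_injOn (fun j : Fin m => (j:ℕ)) ?_ ?_
  · intro j hj
    simp only [Finset.mem_coe, Finset.mem_filter, Finset.mem_univ, true_and] at hj
    simp only [Finset.mem_coe, Finset.mem_Iio]
    refine lt_of_le_of_ne hj.1 ?_
    intro he
    have : j = t := Fin.ext he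
    rw [this, hy] at hj
    simp at hj
  · intro a _ b _ hab
    exact Fin.ext hab

lemma wt_epsOf_pos {m : ℕ} (y : Fin m → Bool) (t : Fin m) :
    1 ≤ wt (epsOf y t) ∧ wt (epsOf y t) ≤ m := by
  rw [wt_epsOf]
  by_cases hy : y t = true
  · rw [if_pos hy]
    have := Wle_pos y t hy
    have := Wle_le y t
    have := t.isLt
    omega
  · rw [if_neg hy]
    have := Wle_le' y t (by simpa using hy)
    have := t.isLt
    omega

lemma wt_epsOf_inj {m : ℕ} (y : Fin m → Bool) (t t' : Fin m)
    (h : wt (epsOf y t) = wt (epsOf y t')) : t = t' := by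
  rcases lt_trichotomy t t' with hlt | heq | hlt
  · exfalso
    rw [wt_epsOf, wt_epsOf] at h
    have hmono := Wle_mono y (le_of_lt (Fin.lt_def.1 hlt))
    have htm := t.isLt; have ht'm := t'.isLt
    have hltv : (t:ℕ) < (t':ℕ) := hlt
    by_cases h1 : y t = true <;> by_cases h2 : y t' = true
    · rw [if_pos h1, if_pos h2] at h
      have := Wle_lt y hltv h2
      omega
    · rw [if_pos h1, if_neg h2] at h
      omega
    · rw [if_neg h1, if_pos h2] at h
      have := Wle_upper y (le_of_lt hltv)
      omega
    · rw [if_neg h1, if_neg h2] at h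
      have := Wle_upper' y hltv (by simpa using h2)
      omega
  · exact heq
  · exfalso
    rw [wt_epsOf, wt_epsOf] at h
    have hmono := Wle_mono y (le_of_lt (Fin.lt_def.1 hlt))
    have htm := t.isLt; have ht'm := t'.isLt
    have hltv : (t':ℕ) < (t:ℕ) := hlt
    by_cases h1 : y t' = true <;> by_cases h2 : y t = true
    · rw [if_pos h1, if_pos h2] at h
      have := Wle_lt y hltv h2
      omega
    · rw [if_pos h1, if_neg h2] at h
      omega
    · rw [if_neg h1, if_pos h2] at h
      have := Wle_upper y (le_of_lt hltv)
      omega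
    · rw [if_neg h1, if_neg h2] at h
      have := Wle_upper' y hltv (by simpa using h2)
      omega

lemma wt_epsOf_surj {m : ℕ} (y : Fin m → Bool) (k : ℕ) (hk1 : 1 ≤ k) (hk2 : k ≤ m) :
    ∃ t : Fin m, wt (epsOf y t) = k := by
  have hm : 0 < m := lt_of_lt_of_le hk1 hk2
  set F : Fin m → Fin m := fun t => ⟨wt (epsOf y t) - 1, by
    have := (wt_epsOf_pos y t).1; have := (wt_epsOf_pos y t).2; omega⟩ with hF
  have hinj : Function.Injective F := by
    intro a b hab
    apply wt_epsOf_inj y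
    have h1 := (wt_epsOf_pos y a).1
    have h2 := (wt_epsOf_pos y b).1
    have := congrArg Fin.val hab
    simp only [hF] at this
    omega
  have hsurj := Finite.surjective_of_injective hinj
  obtain ⟨t, ht⟩ := hsurj ⟨k - 1, by omega⟩
  refine ⟨t, ?_⟩
  have := congrArg Fin.val ht
  simp only [hF] at this
  have := (wt_epsOf_pos y t).1
  omega

lemma tIdx_epsOf {m : ℕ} (y : Fin m → Bool) (t : Fin m) : tIdx (epsOf y t) = (t:ℕ) := by
  have hlast : epsOf y t ⟨m + 1 - 1, Nat.lt_succ_self m⟩ = !(y t) := by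
    rw [epsOf]
    have : ¬ ((⟨m + 1 - 1, Nat.lt_succ_self m⟩ : Fin (m+1)) : ℕ) ≤ (t:ℕ) := by
      simp only [Nat.add_sub_cancel]
      exact not_le.2 t.isLt
    rw [dif_neg this]
  have hub : ∀ i ∈ {i : ℕ | ∃ h : i < m + 1, ∃ h' : m + 1 - 1 < m + 1,
      epsOf y t ⟨i, h⟩ ≠ epsOf y t ⟨m + 1 - 1, h'⟩}, i ≤ (t:ℕ) := by
    rintro i ⟨h, h', hne⟩
    by_contra hgt
    apply hne
    rw [hlast]
    rw [epsOf, dif_neg (by simpa using hgt)]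
  have hmem : (t:ℕ) ∈ {i : ℕ | ∃ h : i < m + 1, ∃ h' : m + 1 - 1 < m + 1,
      epsOf y t ⟨i, h⟩ ≠ epsOf y t ⟨m + 1 - 1, h'⟩} := by
    refine ⟨lt_trans t.isLt (Nat.lt_succ_self m), Nat.lt_succ_self m, ?_⟩
    rw [hlast, epsOf, dif_pos (le_refl _)]
    simp
  exact le_antisymm (csSup_le ⟨_, hmem⟩ hub) (le_csSup ⟨(t:ℕ), hub⟩ hmem)

lemma mem_Aset_epsOf {m : ℕ} (y : Fin m → Bool) (t : Fin m) : y ∈ Aset (epsOf y t) := by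
  intro j hj
  rw [tIdx_epsOf] at hj
  rw [epsOf, dif_pos hj]
  exact congrArg y (Fin.ext rfl)

lemma exists_ne_last {m : ℕ} (ε : Fin (m+1) → Bool) (k : ℕ) (hk1 : 1 ≤ k) (hk2 : k ≤ m)
    (hw : wt ε = k) : ∃ i : Fin (m+1), ε i ≠ ε ⟨m, Nat.lt_succ_self m⟩ := by
  by_contra hc
  push_neg at hc
  rcases Bool.eq_false_or_eq_true (ε ⟨m, Nat.lt_succ_self m⟩) with hb | hb
  · have : wt ε = m + 1 := by
      rw [wt]
      have : (Finset.univ.filter fun i : Fin (m+1) => ε i = true) = Finset.univ := by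
        rw [Finset.filter_eq_self]
        intro i _
        rw [hc i, hb]
      rw [this, Finset.card_univ, Fintype.card_fin]
    omega
  · have : wt ε = 0 := by
      rw [wt, Finset.card_eq_zero, Finset.filter_eq_empty_iff]
      intro i _
      rw [hc i, hb]
      simp
    omega

lemma eps_reconstruct {m : ℕ} (ε : Fin (m+1) → Bool) (k : ℕ) (hk1 : 1 ≤ k) (hk2 : k ≤ m)
    (hw : wt ε = k) (y : Fin m → Bool) (hy : y ∈ Aset ε) :
    ∃ t : Fin m, ε = epsOf y t := by
  set S := {i : ℕ | ∃ h : i < m + 1, ∃ h' : m + 1 - 1 < m + 1,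
      ε ⟨i, h⟩ ≠ ε ⟨m + 1 - 1, h'⟩} with hS
  have hts : tIdx ε = sSup S := rfl
  obtain ⟨i0, hi0⟩ := exists_ne_last ε k hk1 hk2 hw
  have hne : S.Nonempty := ⟨(i0:ℕ), i0.isLt, Nat.lt_succ_self m, by simpa using hi0⟩
  have hbdd : BddAbove S := ⟨m + 1, fun i hi => le_of_lt hi.1⟩
  have hmem : tIdx ε ∈ S := by rw [hts]; exact Nat.sSup_mem hne hbdd
  obtain ⟨ht, h', hdiff⟩ := hmem
  have htm : tIdx ε < m := by
    rcases lt_or_eq_of_le (Nat.lt_succ_iff.1 ht) with h | h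
    · exact h
    · exact absurd (congrArg ε (Fin.ext (show tIdx ε = m + 1 - 1 by omega))) hdiff
  refine ⟨⟨tIdx ε, htm⟩, ?_⟩
  funext j
  have hafter : ∀ i : Fin (m+1), tIdx ε < (i:ℕ) → ε i = ε ⟨m + 1 - 1, h'⟩ := by
    intro i hi
    by_contra hc
    have hiS : (i:ℕ) ∈ S := ⟨i.isLt, h', by simpa using hc⟩
    have := le_csSup hbdd hiS
    rw [← hts] at this
    omega
  by_cases hj : (j:ℕ) ≤ tIdx ε
  · rw [epsOf, dif_pos hj]
    have := hy ⟨(j:ℕ), lt_of_le_of_lt hj htm⟩ hj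
    rw [this]
  · rw [epsOf, dif_neg hj]
    have h1 : ε j = ε ⟨m + 1 - 1, h'⟩ := hafter j (not_le.1 hj)
    have h2 : y ⟨tIdx ε, htm⟩ = ε ⟨tIdx ε, ht⟩ := hy ⟨tIdx ε, htm⟩ (le_refl _)
    rw [h1, h2]
    have h3 : ε ⟨tIdx ε, ht⟩ ≠ ε ⟨m + 1 - 1, h'⟩ := hdiff
    revert h3
    cases ε ⟨tIdx ε, ht⟩ <;> cases ε ⟨m + 1 - 1, h'⟩ <;> simp

lemma key_lemma {m : ℕ} (y : Fin m → Bool) (k : ℕ) (hk1 : 1 ≤ k) (hk2 : k ≤ m) :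
    ∃! ε : Fin (m+1) → Bool, wt ε = k ∧ y ∈ Aset ε := by
  obtain ⟨t, ht⟩ := wt_epsOf_surj y k hk1 hk2
  refine ⟨epsOf y t, ⟨ht, mem_Aset_epsOf y t⟩, ?_⟩
  rintro ε ⟨hw, hy⟩
  obtain ⟨t2, rfl⟩ := eps_reconstruct ε k hk1 hk2 hw y hy
  have h3 : t2 = t := wt_epsOf_inj y t2 t (by rw [hw, ht])
  rw [h3]

/-- Let `d` be even, `s` positive with `2s ≤ d`, and `k ∈ {1,…,s-1}`.
The indexed family `{B_ε : ε ∈ I^s, |ε| = k}` defines a partition of `X_k`: the sets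
`B_ε` with `|ε| = k` are pairwise disjoint and their union is `X_k`. -/
theorem Bset_partition (d s k : ℕ) (hde : Even d) (hs : 0 < s) (hsd : 2 * s ≤ d)
    (hk1 : 1 ≤ k) (hk2 : k ≤ s - 1) :
    (∀ ε γ : Fin s → Bool, wt ε = k → wt γ = k → ε ≠ γ → Bset d ε ∩ Bset d γ = ∅) ∧
    (⋃ ε ∈ {ε : Fin s → Bool | wt ε = k}, Bset d ε) = Xk d s k := by
  obtain ⟨m, rfl⟩ : ∃ m, s = m + 1 := ⟨s - 1, by omega⟩
  have hkm : k ≤ m := by omega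
  have hBset : ∀ ε : Fin (m+1) → Bool, wt ε = k →
      Bset d ε = Xk d (m+1) k ∩ {x | suffix (m+1-1) x ∈ Aset ε} := by
    intro ε hε
    have h1 : ε ≠ (fun _ => false) := by
      intro h
      rw [h] at hε
      have : wt (fun _ : Fin (m+1) => false) = 0 := by simp [wt]
      omega
    have h2 : ε ≠ (fun _ => true) := by
      intro h
      rw [h] at hε
      have : wt (fun _ : Fin (m+1) => true) = m + 1 := by
        simp [wt, Finset.filter_eq_self]
      omega
    rw [Bset, if_neg h1, if_neg h2, hε]
  constructor
  · intro ε γ hε hγ hne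
    rw [Set.eq_empty_iff_forall_notMem]
    rintro x ⟨hxε, hxγ⟩
    rw [hBset ε hε] at hxε
    rw [hBset γ hγ] at hxγ
    obtain ⟨ε₀, _, huniq⟩ := key_lemma (suffix (m+1-1) x) k hk1 hkm
    exact hne ((huniq ε ⟨hε, hxε.2⟩).trans (huniq γ ⟨hγ, hxγ.2⟩).symm)
  · ext x
    simp only [Set.mem_iUnion, Set.mem_setOf_eq]
    constructor
    · rintro ⟨ε, hε, hx⟩
      rw [hBset ε hε] at hx
      exact hx.1
    · intro hx
      obtain ⟨ε, ⟨hw, hA⟩, _⟩ := key_lemma (suffix (m+1-1) x) k hk1 hkm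
      exact ⟨ε, hw, by rw [hBset ε hw]; exact ⟨hx, hA⟩⟩
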